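/- With E = a^{-1} U_R² + a U_θ², 𝓔 = ∫_{S¹} E dθ, P = ∫_{S¹} a^{-1} dθ, P_R = (K²/(2R³)) ∫_{S¹} e^{2η} a^{-1} dθ, and the constraint η_θ = 2 R U_R U_θ, the error term Ω_𝓔 := (P_R/P)𝓔 − (K²/(2R³)) ∫_{S¹} E e^{2η} dθ satisfies |Ω_𝓔| ≤ 𝓔 · (K²/(2R³)) ∫_{S¹} (e^{2η}/a)_R dθ. -/

import Mathlib

open Real MeasureTheory intervalIntegral

theorem hda_fst {F : ℝ → ℝ → ℝ} (hF : ContDiff ℝ (⊤:ℕ∞) (fun p : ℝ×ℝ => F p.1 p.2)) (R θ : ℝ) :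
    HasDerivAt (fun r => F r θ) (fderiv ℝ (fun p : ℝ×ℝ => F p.1 p.2) (R,θ) (1,0)) R := by
  have h1 : HasDerivAt (fun r : ℝ => ((r,θ):ℝ×ℝ)) ((1:ℝ),(0:ℝ)) R :=
    (hasDerivAt_id R).prodMk (hasDerivAt_const R θ)
  exact ((hF.differentiable (by simp) (R,θ)).hasFDerivAt.comp_hasDerivAt R h1)

theorem hda_snd {F : ℝ → ℝ → ℝ} (hF : ContDiff ℝ (⊤:ℕ∞) (fun p : ℝ×ℝ => F p.1 p.2)) (R θ : ℝ) :
    HasDerivAt (F R) (fderiv ℝ (fun p : ℝ×ℝ => F p.1 p.2) (R,θ) (0,1)) θ := by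
  have h1 : HasDerivAt (fun t : ℝ => ((R,t):ℝ×ℝ)) ((0:ℝ),(1:ℝ)) θ :=
    (hasDerivAt_const θ R).prodMk (hasDerivAt_id θ)
  exact ((hF.differentiable (by simp) (R,θ)).hasFDerivAt.comp_hasDerivAt θ h1)

theorem hda_fst' {F : ℝ → ℝ → ℝ} (hF : ContDiff ℝ (⊤:ℕ∞) (fun p : ℝ×ℝ => F p.1 p.2)) (R θ : ℝ) :
    HasDerivAt (fun r => F r θ) (deriv (fun r => F r θ) R) R := by
  have h := hda_fst hF R θ; rw [h.deriv]; exact h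

theorem hda_snd' {F : ℝ → ℝ → ℝ} (hF : ContDiff ℝ (⊤:ℕ∞) (fun p : ℝ×ℝ => F p.1 p.2)) (R θ : ℝ) :
    HasDerivAt (F R) (deriv (F R) θ) θ := by
  have h := hda_snd hF R θ; rw [h.deriv]; exact h

theorem cont_fst {F : ℝ → ℝ → ℝ} (hF : ContDiff ℝ (⊤:ℕ∞) (fun p : ℝ×ℝ => F p.1 p.2)) (R : ℝ) :
    Continuous (fun θ => deriv (fun r => F r θ) R) := by
  have hc : Continuous (fun θ => fderiv ℝ (fun p : ℝ×ℝ => F p.1 p.2) (R,θ) (1,0)) :=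
    ((ContinuousLinearMap.apply ℝ ℝ ((1,0):ℝ×ℝ)).continuous.comp
      (hF.continuous_fderiv (by simp))).comp (Continuous.prodMk_right R)
  have he : (fun θ => deriv (fun r => F r θ) R)
      = fun θ => fderiv ℝ (fun p : ℝ×ℝ => F p.1 p.2) (R,θ) (1,0) := by
    funext θ; exact (hda_fst hF R θ).deriv
  rw [he]; exact hc

theorem cont_snd {F : ℝ → ℝ → ℝ} (hF : ContDiff ℝ (⊤:ℕ∞) (fun p : ℝ×ℝ => F p.1 p.2)) (R : ℝ) :
    Continuous (fun θ => deriv (F R) θ) := by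
  have hc : Continuous (fun θ => fderiv ℝ (fun p : ℝ×ℝ => F p.1 p.2) (R,θ) (0,1)) :=
    ((ContinuousLinearMap.apply ℝ ℝ ((0,1):ℝ×ℝ)).continuous.comp
      (hF.continuous_fderiv (by simp))).comp (Continuous.prodMk_right R)
  have he : (fun θ => deriv (F R) θ)
      = fun θ => fderiv ℝ (fun p : ℝ×ℝ => F p.1 p.2) (R,θ) (0,1) := by
    funext θ; exact (hda_snd hF R θ).deriv
  rw [he]; exact hc

theorem cont_slice {F : ℝ → ℝ → ℝ} (hF : ContDiff ℝ (⊤:ℕ∞) (fun p : ℝ×ℝ => F p.1 p.2)) (R : ℝ) :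
    Continuous (F R) := hF.continuous.comp (Continuous.prodMk_right R)

theorem amgm (ap x y : ℝ) (hap : 0 < ap) : 2 * |x * y| ≤ ap⁻¹ * x ^ 2 + ap * y ^ 2 := by
  rw [abs_mul]
  have h2 : ap⁻¹ * x ^ 2 + ap * y ^ 2 = (x ^ 2 + ap ^ 2 * y ^ 2) / ap := by
    field_simp
  rw [h2, le_div_iff₀ hap]
  nlinarith [sq_nonneg (|x| - ap * |y|), sq_abs x, sq_abs y, abs_nonneg x, abs_nonneg y]


/-- Estimate for the error term
`Ω_𝓔 = (P_R/P)𝓔 − (K²/(2R³)) ∫_{S¹} E e^{2η} dθ`, where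
`P_R = (K²/(2R³)) ∫_{S¹} e^{2η} a⁻¹ dθ`:
`|Ω_𝓔| ≤ 𝓔 (K²/(2R³)) ∫_{S¹} (e^{2η}/a)_R dθ`. -/
theorem error_term_estimate
    (K R₀ : ℝ) (hR₀ : 0 < R₀)
    (U a η : ℝ → ℝ → ℝ)
    (hU : ContDiff ℝ (⊤ : ℕ∞) (fun p : ℝ × ℝ => U p.1 p.2))
    (ha : ContDiff ℝ (⊤ : ℕ∞) (fun p : ℝ × ℝ => a p.1 p.2))
    (hη : ContDiff ℝ (⊤ : ℕ∞) (fun p : ℝ × ℝ => η p.1 p.2))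
    (hapos : ∀ R θ, 0 < a R θ)
    (hUper : ∀ R, Function.Periodic (U R) (2 * π))
    (haper : ∀ R, Function.Periodic (a R) (2 * π))
    (hηper : ∀ R, Function.Periodic (η R) (2 * π))
    (E : ℝ → ℝ → ℝ)
    (hE : ∀ R θ, E R θ
      = (a R θ)⁻¹ * (deriv (fun r => U r θ) R) ^ 2 + a R θ * (deriv (U R) θ) ^ 2)
    (haeq : ∀ R ∈ Set.Ici R₀, ∀ θ,
      deriv (fun r => 2 * Real.log (a r θ)) R = -(K ^ 2 / R ^ 3) * Real.exp (2 * η R θ))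
    (hηR : ∀ R ∈ Set.Ici R₀, ∀ θ,
      deriv (fun r => η r θ) R + K ^ 2 / (4 * R ^ 3) * Real.exp (2 * η R θ)
        = a R θ * R * E R θ)
    (hηθ : ∀ R ∈ Set.Ici R₀, ∀ θ,
      deriv (η R) θ = 2 * R * deriv (fun r => U r θ) R * deriv (U R) θ)
    (P PR 𝓔 Ω : ℝ → ℝ)
    (hPdef : ∀ R, P R = ∫ θ in (0:ℝ)..(2 * π), (a R θ)⁻¹)
    (hPR : ∀ R, PR R
      = K ^ 2 / (2 * R ^ 3) * ∫ θ in (0:ℝ)..(2 * π), Real.exp (2 * η R θ) * (a R θ)⁻¹)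
    (h𝓔 : ∀ R, 𝓔 R = ∫ θ in (0:ℝ)..(2 * π), E R θ)
    (hΩ : ∀ R, Ω R = (PR R / P R) * 𝓔 R
      - K ^ 2 / (2 * R ^ 3) * ∫ θ in (0:ℝ)..(2 * π), E R θ * Real.exp (2 * η R θ)) :
    ∀ R ∈ Set.Ici R₀,
      |Ω R| ≤ 𝓔 R * (K ^ 2 / (2 * R ^ 3)) *
        ∫ θ in (0:ℝ)..(2 * π), deriv (fun r => Real.exp (2 * η r θ) / a r θ) R := by
  intro R hR
  have hRpos : 0 < R := lt_of_lt_of_le hR₀ hR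
  have hRne : R ≠ 0 := hRpos.ne'
  have h2π : (0:ℝ) < 2 * π := by positivity
  have hc : 0 ≤ K ^ 2 / (2 * R ^ 3) := by positivity
  -- continuity facts
  have hacont : Continuous (a R) := cont_slice ha R
  have hηcont : Continuous (η R) := cont_slice hη R
  have hainv_cont : Continuous (fun θ => (a R θ)⁻¹) := hacont.inv₀ fun θ => (hapos R θ).ne'
  set f : ℝ → ℝ := fun θ => Real.exp (2 * η R θ) with hfdef
  have hfcont : Continuous f := Real.continuous_exp.comp (continuous_const.mul hηcont)
  have hfpos : ∀ θ, 0 < f θ := fun θ => Real.exp_pos _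
  have hEcont : Continuous (E R) := by
    have hEeq : E R = fun θ => (a R θ)⁻¹ * (deriv (fun r => U r θ) R) ^ 2
        + a R θ * (deriv (U R) θ) ^ 2 := funext (hE R)
    rw [hEeq]
    exact (hainv_cont.mul ((cont_fst hU R).pow 2)).add (hacont.mul ((cont_snd hU R).pow 2))
  have hEnn : ∀ θ, 0 ≤ E R θ := by
    intro θ; rw [hE R θ]
    have h0 := hapos R θ
    positivity
  set g : ℝ → ℝ := fun θ => 2 * R * E R θ * f θ with hgdef
  have hgcont : Continuous g := (continuous_const.mul hEcont).mul hfcont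
  have hgnn : ∀ θ, 0 ≤ g θ :=
    fun θ => mul_nonneg (mul_nonneg (by positivity) (hEnn θ)) (hfpos θ).le
  set C : ℝ := ∫ θ in (0:ℝ)..(2 * π), g θ with hCdef
  have hCnn : 0 ≤ C := intervalIntegral.integral_nonneg h2π.le (fun u _ => hgnn u)
  -- Step 1 : the radial derivative of e^{2η}/a equals g
  have hder : ∀ θ, deriv (fun r => Real.exp (2 * η r θ) / a r θ) R = g θ := by
    intro θ
    have hdaη := hda_fst' hη R θ
    have hdaa := hda_fst' ha R θ
    have hane : a R θ ≠ 0 := (hapos R θ).ne'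
    have hnum : HasDerivAt (fun r => Real.exp (2 * η r θ))
        (Real.exp (2 * η R θ) * (2 * deriv (fun r => η r θ) R)) R :=
      (hdaη.const_mul 2).exp
    have hdiv := hnum.div hdaa hane
    rw [show deriv (fun r => Real.exp (2 * η r θ) / a r θ) R = _ from hdiv.deriv]
    have hlog : HasDerivAt (fun r => 2 * Real.log (a r θ))
        (2 * (deriv (fun r => a r θ) R / a R θ)) R := (hdaa.log hane).const_mul 2
    have h1 : 2 * (deriv (fun r => a r θ) R / a R θ)
        = -(K ^ 2 / R ^ 3) * Real.exp (2 * η R θ) := by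
      rw [← hlog.deriv]; exact haeq R hR θ
    have h2 := hηR R hR θ
    have hae : deriv (fun r => a r θ) R
        = -(K ^ 2 / R ^ 3) * Real.exp (2 * η R θ) * a R θ / 2 := by
      field_simp at h1 ⊢
      linarith [h1]
    have hηe : deriv (fun r => η r θ) R
        = a R θ * R * E R θ - K ^ 2 / (4 * R ^ 3) * Real.exp (2 * η R θ) := by linarith
    rw [hae, hηe]
    show _ = 2 * R * E R θ * Real.exp (2 * η R θ)
    field_simp
    ring
  -- Step 2 : pointwise bound on the angular derivative of e^{2η}
  have hdabound : ∀ u, |2 * deriv (η R) u * f u| ≤ g u := by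
    intro u
    have hkey := amgm (a R u) (deriv (fun r => U r u) R) (deriv (U R) u) (hapos R u)
    rw [abs_mul, abs_of_pos (hfpos u)]
    have h3 : |2 * deriv (η R) u| ≤ 2 * R * E R u := by
      rw [hηθ R hR u, hE R u]
      have h4 : 2 * (2 * R * deriv (fun r => U r u) R * deriv (U R) u)
          = (2 * R) * (2 * (deriv (fun r => U r u) R * deriv (U R) u)) := by ring
      rw [h4, abs_mul, abs_of_nonneg (by positivity : (0:ℝ) ≤ 2 * R), abs_mul,
        abs_of_nonneg (by norm_num : (0:ℝ) ≤ 2)]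
      have := mul_le_mul_of_nonneg_left hkey (by positivity : (0:ℝ) ≤ 2 * R)
      calc 2 * R * (2 * |deriv (fun r => U r u) R * deriv (U R) u|)
          ≤ 2 * R * ((a R u)⁻¹ * deriv (fun r => U r u) R ^ 2
              + a R u * deriv (U R) u ^ 2) := this
        _ = 2 * R * ((a R u)⁻¹ * deriv (fun r => U r u) R ^ 2
              + a R u * deriv (U R) u ^ 2) := rfl
    exact mul_le_mul_of_nonneg_right h3 (hfpos u).le
  -- Step 3 : oscillation bound for f on [0, 2π]
  have hftc : ∀ s ∈ Set.Icc (0:ℝ) (2 * π), ∀ t ∈ Set.Icc (0:ℝ) (2 * π), |f t - f s| ≤ C := by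
    have key : ∀ s t : ℝ, 0 ≤ s → s ≤ t → t ≤ 2 * π → |f t - f s| ≤ C := by
      intro s t hs hst ht
      have hder2 : ∀ u ∈ Set.uIcc s t, HasDerivAt f (2 * deriv (η R) u * f u) u := by
        intro u _
        have h := ((hda_snd' hη R u).const_mul 2).exp
        convert h using 1
        simp only [hfdef]
        ring
      have hdcont : Continuous (fun u => 2 * deriv (η R) u * f u) :=
        (continuous_const.mul (cont_snd hη R)).mul hfcont
      have heq := integral_eq_sub_of_hasDerivAt hder2 (hdcont.intervalIntegrable s t)
      rw [← heq]
      calc |∫ u in s..t, 2 * deriv (η R) u * f u|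
          ≤ ∫ u in s..t, |2 * deriv (η R) u * f u| := abs_integral_le_integral_abs hst
        _ ≤ ∫ u in s..t, g u := integral_mono_on hst (hdcont.abs.intervalIntegrable s t)
            (hgcont.intervalIntegrable s t) (fun u _ => hdabound u)
        _ ≤ C := integral_mono_interval hs hst ht
            (Filter.Eventually.of_forall fun u => hgnn u) (hgcont.intervalIntegrable 0 (2 * π))
    intro s hs t ht
    rcases le_total s t with h | h
    · exact key s t hs.1 h ht.2
    · rw [abs_sub_comm]; exact key t s ht.1 h hs.2
  -- P is positive
  have hPpos : 0 < P R := by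
    rw [hPdef]
    apply intervalIntegral.intervalIntegral_pos_of_pos_on
      (hainv_cont.intervalIntegrable 0 (2 * π))
      (fun x _ => inv_pos.2 (hapos R x)) h2π
  -- Step 4 : the weighted average of f lies within C of each value of f
  set A : ℝ := ∫ θ in (0:ℝ)..(2 * π), f θ * (a R θ)⁻¹ with hAdef
  have hAbd : ∀ θ ∈ Set.Icc (0:ℝ) (2 * π), |A - f θ * P R| ≤ C * P R := by
    intro θ hθ
    have h1 : A - f θ * P R = ∫ t in (0:ℝ)..(2 * π), (f t - f θ) * (a R t)⁻¹ := by
      have heq2 : (fun t => (f t - f θ) * (a R t)⁻¹)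
          = fun t => f t * (a R t)⁻¹ - f θ * (a R t)⁻¹ := by funext t; ring
      rw [heq2, intervalIntegral.integral_sub (f := fun t => f t * (a R t)⁻¹)
          (g := fun t => f θ * (a R t)⁻¹)
        ((hfcont.mul hainv_cont).intervalIntegrable _ _)
        ((continuous_const.mul hainv_cont).intervalIntegrable _ _),
        intervalIntegral.integral_const_mul, hPdef]
    rw [h1]
    calc |∫ t in (0:ℝ)..(2 * π), (f t - f θ) * (a R t)⁻¹|
        ≤ ∫ t in (0:ℝ)..(2 * π), |(f t - f θ) * (a R t)⁻¹| :=
          abs_integral_le_integral_abs h2π.le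
      _ ≤ ∫ t in (0:ℝ)..(2 * π), C * (a R t)⁻¹ :=
          integral_mono_on h2π.le
            (((hfcont.sub continuous_const).mul hainv_cont).abs.intervalIntegrable _ _)
            ((continuous_const.mul hainv_cont).intervalIntegrable _ _)
            (fun t ht => by
              rw [abs_mul, abs_of_pos (inv_pos.2 (hapos R t))]
              exact mul_le_mul_of_nonneg_right (hftc θ hθ t ht)
                (inv_pos.2 (hapos R t)).le)
      _ = C * P R := by rw [intervalIntegral.integral_const_mul, hPdef]
  have hfrac : ∀ θ ∈ Set.Icc (0:ℝ) (2 * π), |A / P R - f θ| ≤ C := by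
    intro θ hθ
    have h1 : A / P R - f θ = (A - f θ * P R) / P R := by field_simp
    rw [h1, abs_div, abs_of_pos hPpos, div_le_iff₀ hPpos]
    exact hAbd θ hθ
  -- Step 5 : rewrite Ω
  have hΩeq : Ω R = K ^ 2 / (2 * R ^ 3)
      * ∫ θ in (0:ℝ)..(2 * π), E R θ * (A / P R - f θ) := by
    rw [hΩ R, hPR R, h𝓔 R]
    have heq3 : (fun θ => E R θ * (A / P R - f θ))
        = fun θ => (A / P R) * E R θ - E R θ * f θ := by funext θ; ring
    rw [heq3, intervalIntegral.integral_sub (f := fun θ => (A / P R) * E R θ)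
        (g := fun θ => E R θ * f θ)
      ((continuous_const.mul hEcont).intervalIntegrable _ _)
      ((hEcont.mul hfcont).intervalIntegrable _ _),
      intervalIntegral.integral_const_mul]
    have hA' : (∫ θ in (0:ℝ)..(2 * π), Real.exp (2 * η R θ) * (a R θ)⁻¹) = A := rfl
    have hf' : (∫ θ in (0:ℝ)..(2 * π), E R θ * Real.exp (2 * η R θ))
        = ∫ θ in (0:ℝ)..(2 * π), E R θ * f θ := rfl
    rw [hA', hf']
    ring
  have hDbd : |∫ θ in (0:ℝ)..(2 * π), E R θ * (A / P R - f θ)| ≤ 𝓔 R * C := by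
    calc |∫ θ in (0:ℝ)..(2 * π), E R θ * (A / P R - f θ)|
        ≤ ∫ θ in (0:ℝ)..(2 * π), |E R θ * (A / P R - f θ)| :=
          abs_integral_le_integral_abs h2π.le
      _ ≤ ∫ θ in (0:ℝ)..(2 * π), E R θ * C :=
          integral_mono_on h2π.le
            ((hEcont.mul ((continuous_const.sub hfcont))).abs.intervalIntegrable _ _)
            ((hEcont.mul continuous_const).intervalIntegrable _ _)
            (fun θ hθ => by
              rw [abs_mul, abs_of_nonneg (hEnn θ)]
              exact mul_le_mul_of_nonneg_left (hfrac θ hθ) (hEnn θ))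
      _ = 𝓔 R * C := by rw [intervalIntegral.integral_mul_const, h𝓔 R]
  have hRHS : (∫ θ in (0:ℝ)..(2 * π), deriv (fun r => Real.exp (2 * η r θ) / a r θ) R)
      = C := by
    rw [hCdef]
    apply intervalIntegral.integral_congr
    intro θ _
    exact hder θ
  rw [hΩeq, hRHS, abs_mul, abs_of_nonneg hc]
  calc K ^ 2 / (2 * R ^ 3) * |∫ θ in (0:ℝ)..(2 * π), E R θ * (A / P R - f θ)|
      ≤ K ^ 2 / (2 * R ^ 3) * (𝓔 R * C) := mul_le_mul_of_nonneg_left hDbd hc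
    _ = 𝓔 R * (K ^ 2 / (2 * R ^ 3)) * C := by ring
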